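/- The 4-belts of G_Q are exactly the four vertex sets {a,c,f,g}, {a,d,f,j}, {c,d,h,j}, and {f,g,h,j}; in particular G_Q has exactly four 4-belts. -/

import Mathlib

/-- Edge list of the facet-intersection graph `G_Q` of the polytope `𝒬`
(vertices: a=0, b=1, c=2, d=3, e=4, f=5, g=6, h=7, i=8, j=9, k=10). -/
def qEdgeList : List (Fin 11 × Fin 11) :=
  [(0,1),(0,2),(0,3),(0,4),(0,5),(1,2),(1,5),(1,6),(2,3),(2,6),(2,7),(2,8),
   (3,4),(3,8),(3,9),(4,5),(4,9),(5,6),(5,9),(5,10),(6,7),(6,10),(7,8),(7,9),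
   (7,10),(8,9),(9,10)]

/-- The facet-intersection graph `G_Q` of the polytope `𝒬`. -/
def G_Q : SimpleGraph (Fin 11) where
  Adj u v := (u, v) ∈ qEdgeList ∨ (v, u) ∈ qEdgeList
  symm := ⟨fun u v h => h.symm⟩
  loopless := ⟨by intro v; fin_cases v <;> decide⟩

instance : DecidableRel G_Q.Adj :=
  fun u v => inferInstanceAs (Decidable ((u, v) ∈ qEdgeList ∨ (v, u) ∈ qEdgeList))

/-- A 4-belt of a simple graph `G` is a 4-element vertex set that can be written as
`{w, x, y, z}` where `wx`, `xy`, `yz`, `zw` are edges of `G` while `wy`, `xz` are not. -/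
def IsFourBelt {V : Type*} (G : SimpleGraph V) (B : Set V) : Prop :=
  ∃ w x y z : V, B = {w, x, y, z} ∧ B.ncard = 4 ∧
    G.Adj w x ∧ G.Adj x y ∧ G.Adj y z ∧ G.Adj z w ∧ ¬ G.Adj w y ∧ ¬ G.Adj x z

/-- The pair `{u, v}` is a diagonal of the 4-belt `B` of `G`. -/
def IsDiagonalOfBelt {V : Type*} (G : SimpleGraph V) (u v : V) (B : Set V) : Prop :=
  ∃ w x y z : V, B = {w, x, y, z} ∧ B.ncard = 4 ∧
    G.Adj w x ∧ G.Adj x y ∧ G.Adj y z ∧ G.Adj z w ∧ ¬ G.Adj w y ∧ ¬ G.Adj x z ∧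
    (({u, v} : Set V) = {w, y} ∨ ({u, v} : Set V) = {x, z})

/-- The pair `{u, v}` is a diagonal of some 4-belt of `G`. -/
def IsBeltDiagonal {V : Type*} (G : SimpleGraph V) (u v : V) : Prop :=
  ∃ B : Set V, IsDiagonalOfBelt G u v B

lemma coe4 (w x y z : Fin 11) :
    ({w, x, y, z} : Set (Fin 11)) = (↑({w, x, y, z} : Finset (Fin 11)) : Set (Fin 11)) := by
  simp

set_option maxHeartbeats 2000000 in
lemma key : ∀ w x y z : Fin 11,
    (({w,x,y,z} : Finset (Fin 11)).card = 4 ∧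
    G_Q.Adj w x ∧ G_Q.Adj x y ∧ G_Q.Adj y z ∧ G_Q.Adj z w ∧
    ¬ G_Q.Adj w y ∧ ¬ G_Q.Adj x z) →
    (({w,x,y,z} : Finset (Fin 11)) = {0,2,5,6} ∨ ({w,x,y,z} : Finset (Fin 11)) = {0,3,5,9} ∨
    ({w,x,y,z} : Finset (Fin 11)) = {2,3,7,9} ∨ ({w,x,y,z} : Finset (Fin 11)) = {5,6,7,9}) := by
  decide

lemma ncard4 (w x y z : Fin 11) (h : ({w,x,y,z} : Finset (Fin 11)).card = 4) :
    ({w, x, y, z} : Set (Fin 11)).ncard = 4 := by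
  rw [coe4, Set.ncard_coe_finset]; exact h

lemma belt_of (w x y z : Fin 11)
    (h : ({w,x,y,z} : Finset (Fin 11)).card = 4 ∧
      G_Q.Adj w x ∧ G_Q.Adj x y ∧ G_Q.Adj y z ∧ G_Q.Adj z w ∧
      ¬ G_Q.Adj w y ∧ ¬ G_Q.Adj x z) :
    IsFourBelt G_Q ({w, x, y, z} : Set (Fin 11)) :=
  ⟨w, x, y, z, rfl, ncard4 w x y z h.1, h.2.1, h.2.2.1, h.2.2.2.1, h.2.2.2.2.1,
    h.2.2.2.2.2.1, h.2.2.2.2.2.2⟩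

/-- The 4-belts of `G_Q` are exactly the four vertex sets {a,c,f,g}, {a,d,f,j},
{c,d,h,j} and {f,g,h,j}; in particular `G_Q` has exactly four 4-belts. -/
theorem stmt_5 :
    {B : Set (Fin 11) | IsFourBelt G_Q B} =
      {({0, 2, 5, 6} : Set (Fin 11)), {0, 3, 5, 9}, {2, 3, 7, 9}, {5, 6, 7, 9}} ∧
    {B : Set (Fin 11) | IsFourBelt G_Q B}.ncard = 4 := by
  have hset : {B : Set (Fin 11) | IsFourBelt G_Q B} =
      {({0, 2, 5, 6} : Set (Fin 11)), {0, 3, 5, 9}, {2, 3, 7, 9}, {5, 6, 7, 9}} := by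
    ext B
    constructor
    · rintro ⟨w, x, y, z, hB, hn, h1, h2, h3, h4, h5, h6⟩
      have hc : ({w,x,y,z} : Finset (Fin 11)).card = 4 := by
        rw [← Set.ncard_coe_finset, ← coe4, ← hB]; exact hn
      rcases key w x y z ⟨hc, h1, h2, h3, h4, h5, h6⟩ with h | h | h | h <;>
        [left; (right; left); (right; right; left); (right; right; right)] <;>
        · show B = _
          rw [hB, coe4, h]
          simp
    · intro hB
      rcases hB with h | h | h | h
      · subst h
        have : ({0, 2, 5, 6} : Set (Fin 11)) = ({0, 2, 6, 5} : Set (Fin 11)) := by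
          rw [coe4, coe4]; exact congrArg (fun s : Finset (Fin 11) => (↑s : Set (Fin 11))) (by decide)
        rw [this]
        exact belt_of 0 2 6 5 (by decide)
      · subst h
        have : ({0, 3, 5, 9} : Set (Fin 11)) = ({0, 3, 9, 5} : Set (Fin 11)) := by
          rw [coe4, coe4]; exact congrArg (fun s : Finset (Fin 11) => (↑s : Set (Fin 11))) (by decide)
        rw [this]
        exact belt_of 0 3 9 5 (by decide)
      · subst h
        have : ({2, 3, 7, 9} : Set (Fin 11)) = ({2, 3, 9, 7} : Set (Fin 11)) := by
          rw [coe4, coe4]; exact congrArg (fun s : Finset (Fin 11) => (↑s : Set (Fin 11))) (by decide)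
        rw [this]
        exact belt_of 2 3 9 7 (by decide)
      · subst h
        exact belt_of 5 6 7 9 (by decide)
  refine ⟨hset, ?_⟩
  rw [hset]
  have ne12 : ({0, 2, 5, 6} : Set (Fin 11)) ≠ {0, 3, 5, 9} := by
    rw [coe4, coe4]; intro h; exact absurd (Finset.coe_injective h) (by decide)
  have ne13 : ({0, 2, 5, 6} : Set (Fin 11)) ≠ {2, 3, 7, 9} := by
    rw [coe4, coe4]; intro h; exact absurd (Finset.coe_injective h) (by decide)
  have ne14 : ({0, 2, 5, 6} : Set (Fin 11)) ≠ {5, 6, 7, 9} := by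
    rw [coe4, coe4]; intro h; exact absurd (Finset.coe_injective h) (by decide)
  have ne23 : ({0, 3, 5, 9} : Set (Fin 11)) ≠ {2, 3, 7, 9} := by
    rw [coe4, coe4]; intro h; exact absurd (Finset.coe_injective h) (by decide)
  have ne24 : ({0, 3, 5, 9} : Set (Fin 11)) ≠ {5, 6, 7, 9} := by
    rw [coe4, coe4]; intro h; exact absurd (Finset.coe_injective h) (by decide)
  have ne34 : ({2, 3, 7, 9} : Set (Fin 11)) ≠ {5, 6, 7, 9} := by
    rw [coe4, coe4]; intro h; exact absurd (Finset.coe_injective h) (by decide)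
  rw [Set.ncard_insert_of_notMem (by simp [ne12, ne13, ne14]) (Set.toFinite _),
    Set.ncard_insert_of_notMem (by simp [ne23, ne24]) (Set.toFinite _),
    Set.ncard_insert_of_notMem (by simp [ne34]) (Set.toFinite _),
    Set.ncard_singleton]
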